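/- Let f:[0,∞)→[0,∞) be non-increasing with K·f(t)^{1+ε} ≤ f(t-1) - f(t+1) for all t ≥ 1, where K > 0 and 0 < ε < 1. Then the series ∑_{j=1}^{∞} (f(j) - f(j+1))^{1/2} converges. -/

import Mathlib

open Real Finset

/-- weighted AM-GM: `t^q ≤ q t + (1-q)` for `t ≥ 0`, `0 ≤ q ≤ 1`. -/
lemma amgm {t q : ℝ} (ht : 0 ≤ t) (hq : 0 ≤ q) (hq1 : q ≤ 1) :
    t ^ q ≤ q * t + (1 - q) := by
  have h := Real.geom_mean_le_arith_mean2_weighted (w₁ := q) (w₂ := 1 - q) (p₁ := t) (p₂ := 1)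
    hq (by linarith) ht zero_le_one (by ring)
  simpa using h

/-- tangent line inequality for the convex function `x ↦ x^{-ε}`. -/
lemma tangent {ε A B : ℝ} (hε : 0 < ε) (hε1 : ε ≤ 1) (hB : 0 < B) (hBA : B ≤ A) :
    A ^ (-ε) + ε * (A - B) * A ^ (-(1 + ε)) ≤ B ^ (-ε) := by
  have hA : 0 < A := lt_of_lt_of_le hB hBA
  set t : ℝ := B / A with htdef
  have ht : 0 < t := div_pos hB hA
  have ht1 : t ≤ 1 := (div_le_one hA).mpr hBA
  have hamgm : t ^ ε ≤ ε * t + (1 - ε) := amgm ht.le hε.le hε1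
  have htpos : (0:ℝ) < t ^ ε := rpow_pos_of_pos ht ε
  have key : 1 + ε * (1 - t) ≤ t ^ (-ε) := by
    rw [rpow_neg ht.le]
    have hy0 : 0 ≤ ε * (1 - t) := by nlinarith
    have h5 : (1 + ε * (1 - t)) * t ^ ε ≤ 1 := by
      nlinarith [mul_le_mul_of_nonneg_left hamgm (show (0:ℝ) ≤ 1 + ε * (1 - t) by linarith),
        sq_nonneg (ε * (1 - t))]
    calc 1 + ε * (1 - t) = (1 + ε * (1 - t)) * t ^ ε * (t ^ ε)⁻¹ := by field_simp
      _ ≤ 1 * (t ^ ε)⁻¹ := by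
          apply mul_le_mul_of_nonneg_right h5 (by positivity)
      _ = (t ^ ε)⁻¹ := one_mul _
  have hBt : B = A * t := by rw [htdef]; field_simp
  have h1 : B ^ (-ε) = A ^ (-ε) * t ^ (-ε) := by
    rw [hBt, mul_rpow hA.le ht.le]
  have h2 : A ^ (-(1 + ε)) = A⁻¹ * A ^ (-ε) := by
    rw [show -(1+ε) = -1 + -ε by ring, rpow_add hA, rpow_neg_one]
  have h3 : ε * (A - B) * (A⁻¹ * A ^ (-ε)) = (ε * (1 - t)) * A ^ (-ε) := by
    rw [htdef]
    field_simp
  rw [h1, h2, h3]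
  have hApos : (0:ℝ) < A ^ (-ε) := rpow_pos_of_pos hA _
  calc A ^ (-ε) + ε * (1 - t) * A ^ (-ε) = (1 + ε * (1 - t)) * A ^ (-ε) := by ring
    _ ≤ t ^ (-ε) * A ^ (-ε) := by gcongr
    _ = A ^ (-ε) * t ^ (-ε) := by ring

/-- polynomial decay for the recursion `b (n+1) + K b(n+1)^{1+ε} ≤ b n`. -/
lemma seq_decay {ε K : ℝ} (hε : 0 < ε) (hε1 : ε < 1) (hK : 0 < K)
    (b : ℕ → ℝ) (hb0 : ∀ n, 0 ≤ b n)
    (hrec : ∀ n, K * b (n + 1) ^ (1 + ε) ≤ b n - b (n + 1)) (hb : 0 < b 0) :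
    ∃ cst > 0, ∀ n : ℕ, 0 < b n → cst * n ≤ (b n) ^ (-ε) := by
  have hmono : ∀ n, b (n + 1) ≤ b n := by
    intro n
    have h := hrec n
    have : 0 ≤ K * b (n + 1) ^ (1 + ε) := mul_nonneg hK.le (rpow_nonneg (hb0 _) _)
    linarith
  have hble : ∀ n, b n ≤ b 0 := by
    intro n
    induction n with
    | zero => exact le_refl _
    | succ n ih => exact (hmono n).trans ih
  have h2e : (1:ℝ) < 2 ^ ε := by
    rw [show (1:ℝ) = 2 ^ (0:ℝ) by simp]
    exact rpow_lt_rpow_of_exponent_lt one_lt_two hε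
  have hb0e : (0:ℝ) < (b 0) ^ (-ε) := rpow_pos_of_pos hb _
  refine ⟨min (ε * K / 4) ((2 ^ ε - 1) * (b 0) ^ (-ε)),
    lt_min (by positivity) (mul_pos (by linarith) hb0e), ?_⟩
  set cst := min (ε * K / 4) ((2 ^ ε - 1) * (b 0) ^ (-ε)) with hcst
  intro n
  induction n with
  | zero =>
    intro h
    simpa using (rpow_pos_of_pos h (-ε)).le
  | succ n ih =>
    intro hpos
    have hA : 0 < b n := by
      have h := hrec n
      have : 0 ≤ K * b (n + 1) ^ (1 + ε) := mul_nonneg hK.le (rpow_nonneg (hb0 _) _)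
      linarith
    have h1 : cst * n ≤ (b n) ^ (-ε) := ih hA
    have key : cst ≤ (b (n + 1)) ^ (-ε) - (b n) ^ (-ε) := by
      rcases le_or_gt (b n) (2 * b (n + 1)) with hcase | hcase
      · -- ratio ≥ 1/2 : use tangent line inequality
        have htan := tangent hε hε1.le hpos (hmono n)
        have hAe : (0:ℝ) < (b n) ^ (1 + ε) := rpow_pos_of_pos hA _
        have hstep : ε * K * ((b (n+1)) ^ (1 + ε) * ((b n) ^ (1 + ε))⁻¹)
            ≤ ε * (b n - b (n + 1)) * (b n) ^ (-(1 + ε)) := by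
          rw [rpow_neg hA.le]
          have := hrec n
          have h' : K * (b (n+1)) ^ (1 + ε) * ((b n) ^ (1 + ε))⁻¹
              ≤ (b n - b (n+1)) * ((b n) ^ (1 + ε))⁻¹ := by gcongr
          calc ε * K * ((b (n+1)) ^ (1 + ε) * ((b n) ^ (1 + ε))⁻¹)
              = ε * (K * (b (n+1)) ^ (1 + ε) * ((b n) ^ (1 + ε))⁻¹) := by ring
            _ ≤ ε * ((b n - b (n+1)) * ((b n) ^ (1 + ε))⁻¹) := by
                exact mul_le_mul_of_nonneg_left h' hε.le
            _ = ε * (b n - b (n+1)) * ((b n) ^ (1 + ε))⁻¹ := by ring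
        have hratio : (1:ℝ) / 4 ≤ (b (n+1)) ^ (1 + ε) * ((b n) ^ (1 + ε))⁻¹ := by
          have hq : (b (n+1)) ^ (1 + ε) * ((b n) ^ (1 + ε))⁻¹ = (b (n+1) / b n) ^ (1 + ε) := by
            rw [div_rpow (hb0 _) (hb0 _), div_eq_mul_inv]
          rw [hq]
          have hhalf : (1:ℝ) / 2 ≤ b (n+1) / b n := by
            rw [le_div_iff₀ hA]; linarith
          calc (1:ℝ) / 4 = (1 / 2 : ℝ) ^ ((2:ℕ) : ℝ) := by
                rw [rpow_natCast]; norm_num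
            _ ≤ (1 / 2 : ℝ) ^ (1 + ε) := by
                apply rpow_le_rpow_of_exponent_ge (by norm_num) (by norm_num)
                push_cast; linarith
            _ ≤ (b (n+1) / b n) ^ (1 + ε) := by
                apply rpow_le_rpow (by norm_num) hhalf (by positivity)
        have : ε * K / 4 ≤ (b (n + 1)) ^ (-ε) - (b n) ^ (-ε) := by
          have h6 : ε * K * (1/4) ≤ ε * K * ((b (n+1)) ^ (1 + ε) * ((b n) ^ (1 + ε))⁻¹) := by
            apply mul_le_mul_of_nonneg_left hratio (by positivity)
          linarith
        exact le_trans (min_le_left _ _) this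
      · -- fast decrease : b(n+1) < b n / 2
        have hh : (b (n+1)) ^ (-ε) ≥ (b n / 2) ^ (-ε) := by
          apply rpow_le_rpow_of_nonpos hpos (by linarith) (by linarith)
        have hsplit : (b n / 2) ^ (-ε) = 2 ^ ε * (b n) ^ (-ε) := by
          rw [div_rpow (hb0 n) (by norm_num), rpow_neg (hb0 n), rpow_neg (by norm_num : (0:ℝ) ≤ 2)]
          rw [div_eq_mul_inv, inv_inv, mul_comm]
        have hbn : (b 0) ^ (-ε) ≤ (b n) ^ (-ε) :=
          rpow_le_rpow_of_nonpos hA (hble n) (by linarith)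
        have : (2 ^ ε - 1) * (b 0) ^ (-ε) ≤ (b (n + 1)) ^ (-ε) - (b n) ^ (-ε) := by
          have : (2 ^ ε - 1) * (b 0) ^ (-ε) ≤ (2 ^ ε - 1) * (b n) ^ (-ε) := by
            apply mul_le_mul_of_nonneg_left hbn (by linarith)
          nlinarith [hh, hsplit]
        exact le_trans (min_le_right _ _) this
    push_cast
    linarith

/-- `(a-b) a^{-s} (1-s) ≤ a^{1-s} - b^{1-s}` for `0 ≤ b ≤ a`, `0 < s < 1`. -/
lemma per_term {s a b : ℝ} (hs : 0 < s) (hs1 : s < 1) (hb : 0 ≤ b) (hba : b ≤ a) :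
    (a - b) * a ^ (-s) * (1 - s) ≤ a ^ (1 - s) - b ^ (1 - s) := by
  have ha : 0 ≤ a := hb.trans hba
  rcases eq_or_lt_of_le ha with h | h
  · have hb0 : b = 0 := le_antisymm (hba.trans h.symm.le) hb
    rw [← h, hb0]
    rw [zero_rpow (by linarith), zero_rpow (by linarith)]
    simp
  · -- a > 0
    set q : ℝ := 1 - s with hq
    set t : ℝ := b / a with ht
    have ht0 : 0 ≤ t := div_nonneg hb h.le
    have ham : t ^ q ≤ q * t + (1 - q) := amgm ht0 (by linarith) (by linarith)
    have hbq : b ^ q = a ^ q * t ^ q := by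
      rw [ht, div_rpow hb h.le, mul_div_cancel₀]
      exact (rpow_pos_of_pos h q).ne'
    have haq : 0 < a ^ q := rpow_pos_of_pos h q
    have hsplit : a ^ q = a ^ (-s) * a := by
      rw [hq, show (1:ℝ) - s = -s + 1 by ring, rpow_add h, rpow_one]
    have hmain : b ^ q ≤ a ^ q * (q * t + (1 - q)) :=
      hbq ▸ mul_le_mul_of_nonneg_left ham haq.le
    have htb : a ^ q * t = a ^ (-s) * b := by
      rw [hsplit, ht]; field_simp
    have : a ^ q * (q * t + (1 - q)) = q * (a ^ (-s) * b) + (1 - q) * a ^ q := by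
      rw [← htb]; ring
    rw [this] at hmain
    rw [hsplit]
    have hq1s : q = 1 - s := rfl
    nlinarith [hmain]

/-- telescoping summability of the weighted increments. -/
lemma summable_weighted {s : ℝ} (hs : 0 < s) (hs1 : s < 1) (c : ℕ → ℝ)
    (h0 : ∀ n, 0 ≤ c n) (hm : ∀ n, c (n + 1) ≤ c n) :
    Summable (fun n : ℕ => (c (n + 1) - c (n + 2)) * (c (n + 1)) ^ (-s)) := by
  apply summable_of_sum_range_le (c := (c 1) ^ (1 - s) / (1 - s))
  · intro n
    have := hm (n + 1)
    have := rpow_nonneg (h0 (n + 1)) (-s)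
    nlinarith
  · intro N
    have hper : ∀ n : ℕ, (c (n + 1) - c (n + 2)) * (c (n + 1)) ^ (-s)
        ≤ ((c (n + 1)) ^ (1 - s) - (c (n + 2)) ^ (1 - s)) / (1 - s) := by
      intro n
      rw [le_div_iff₀ (by linarith)]
      exact per_term hs hs1 (h0 (n + 2)) (hm (n + 1))
    have h1 : ∑ n ∈ range N, (c (n + 1) - c (n + 2)) * (c (n + 1)) ^ (-s)
        ≤ ∑ n ∈ range N, ((c (n + 1)) ^ (1 - s) - (c (n + 2)) ^ (1 - s)) / (1 - s) :=
      Finset.sum_le_sum fun n _ => hper n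
    have h2 : ∑ n ∈ range N, ((c (n + 1)) ^ (1 - s) - (c (n + 2)) ^ (1 - s)) / (1 - s)
        = (c 1) ^ (1 - s) / (1 - s) - (c (N + 1)) ^ (1 - s) / (1 - s) := by
      rw [← Finset.sum_range_sub' (fun k => (c (k + 1)) ^ (1 - s) / (1 - s)) N]
      apply Finset.sum_congr rfl
      intro n _
      ring
    have h3 : 0 ≤ (c (N + 1)) ^ (1 - s) / (1 - s) :=
      div_nonneg (rpow_nonneg (h0 _) _) (by linarith)
    linarith

/-- geometric–arithmetic mean for square root. -/
lemma sqrt_le_half_add {x y : ℝ} (hx : 0 ≤ x) (hy : 0 ≤ y) :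
    (x * y) ^ ((1:ℝ)/2) ≤ (x + y) / 2 := by
  have h := Real.geom_mean_le_arith_mean2_weighted (w₁ := 1/2) (w₂ := 1/2) (p₁ := x) (p₂ := y)
    (by norm_num) (by norm_num) hx hy (by norm_num)
  rw [mul_rpow hx hy]
  calc x ^ ((1:ℝ)/2) * y ^ ((1:ℝ)/2) ≤ 1/2 * x + 1/2 * y := h
    _ = (x + y) / 2 := by ring


/-- If `f : [0,∞) → [0,∞)` is non-increasing and satisfies
`K · f(t)^{1+ε} ≤ f(t-1) - f(t+1)` for all `t ≥ 1`, where `K > 0` and `0 < ε < 1`, then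
the series `∑_{j=1}^∞ (f(j) - f(j+1))^{1/2}` converges. -/
theorem stmt_1 (f : ℝ → ℝ) (ε K : ℝ) (hε : 0 < ε) (hε1 : ε < 1) (hK : 0 < K)
    (hnonneg : ∀ t : ℝ, 0 ≤ t → 0 ≤ f t)
    (hmono : ∀ s t : ℝ, 0 ≤ s → s ≤ t → f t ≤ f s)
    (hineq : ∀ t : ℝ, 1 ≤ t → K * f t ^ (1 + ε) ≤ f (t - 1) - f (t + 1)) :
    Summable (fun j : ℕ => (f ((j : ℝ) + 1) - f ((j : ℝ) + 2)) ^ ((1 : ℝ) / 2)) := by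
  by_cases h0 : f 0 = 0
  · -- trivial case : f vanishes identically on [0,∞)
    have hz : ∀ t : ℝ, 0 ≤ t → f t = 0 := fun t ht =>
      le_antisymm (h0 ▸ hmono 0 t le_rfl ht) (hnonneg t ht)
    have : (fun j : ℕ => (f ((j : ℝ) + 1) - f ((j : ℝ) + 2)) ^ ((1 : ℝ) / 2))
        = fun _ : ℕ => (0 : ℝ) := by
      funext j
      rw [hz ((j:ℝ)+1) (by positivity), hz ((j:ℝ)+2) (by positivity)]
      rw [sub_zero, zero_rpow (by norm_num)]
    rw [this]
    exact summable_zero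
  -- main case
  set s : ℝ := (1 + ε) / 2 with hsdef
  have hs0 : 0 < s := by rw [hsdef]; linarith
  have hs1 : s < 1 := by rw [hsdef]; linarith
  have hsε : ε < s := by rw [hsdef]; linarith
  set c : ℕ → ℝ := fun n => f (n : ℝ) with hcdef
  have hc0 : ∀ n, 0 ≤ c n := fun n => hnonneg _ (Nat.cast_nonneg n)
  have hcle : ∀ i j : ℕ, i ≤ j → c j ≤ c i := fun i j h =>
    hmono _ _ (Nat.cast_nonneg i) (Nat.cast_le.mpr h)
  have hcm : ∀ n, c (n + 1) ≤ c n := fun n => hcle n (n + 1) (Nat.le_succ n)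
  have hcpos0 : 0 < c 0 := by
    have := hc0 0
    rcases eq_or_lt_of_le this with h | h
    · exact absurd (by simpa [hcdef] using h.symm) h0
    · exact h
  have hrec2 : ∀ n : ℕ, K * c (n + 2) ^ (1 + ε) ≤ c n - c (n + 2) := by
    intro n
    have h := hineq ((n : ℝ) + 1) (by simp)
    have e1 : (n : ℝ) + 1 - 1 = (n : ℝ) := by ring
    rw [e1] at h
    have hfle : f ((n : ℝ) + 1 + 1) ≤ f ((n : ℝ) + 1) :=
      hmono _ _ (by positivity) (by linarith)
    have hpow : c (n + 2) ^ (1 + ε) ≤ f ((n : ℝ) + 1) ^ (1 + ε) := by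
      apply rpow_le_rpow (hc0 (n + 2)) _ (by linarith)
      have : ((n + 2 : ℕ) : ℝ) = (n : ℝ) + 1 + 1 := by push_cast; ring
      rw [hcdef]; simp only; rw [this]
      exact hfle
    have hcn2 : c (n + 2) = f ((n : ℝ) + 1 + 1) := by
      rw [hcdef]; simp only; norm_num; ring_nf
    have hcn : c n = f (n : ℝ) := rfl
    calc K * c (n + 2) ^ (1 + ε) ≤ K * f ((n : ℝ) + 1) ^ (1 + ε) := by
          exact mul_le_mul_of_nonneg_left hpow hK.le
      _ ≤ f (n : ℝ) - f ((n : ℝ) + 1 + 1) := h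
      _ = c n - c (n + 2) := by rw [hcn, hcn2]
  -- decay
  obtain ⟨cst, hcstpos, hcl⟩ := seq_decay hε hε1 hK (fun n => c (2 * n))
    (fun n => hc0 _)
    (by
      intro n
      have h := hrec2 (2 * n)
      have e : 2 * (n + 1) = 2 * n + 2 := by ring
      show K * c (2 * (n + 1)) ^ (1 + ε) ≤ c (2 * n) - c (2 * (n + 1))
      rw [e]
      exact h)
    (by simpa using hcpos0)
  -- pointwise decay bound for the s-powers
  have hdecs : ∀ n : ℕ, c (n + 2) ^ s
      ≤ (4 / cst) ^ (ε⁻¹ * s) * ((n : ℝ) + 2) ^ (-(ε⁻¹ * s)) := by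
    intro n
    have hRpos : (0 : ℝ) < (4 / cst) ^ (ε⁻¹ * s) * ((n : ℝ) + 2) ^ (-(ε⁻¹ * s)) := by
      apply mul_pos (rpow_pos_of_pos (by positivity) _) (rpow_pos_of_pos (by positivity) _)
    rcases eq_or_lt_of_le (hc0 (n + 2)) with hx | hx
    · rw [← hx, zero_rpow hs0.ne']
      exact hRpos.le
    · set m : ℕ := (n + 2) / 2 with hm
      have hmb : 2 * m ≤ n + 2 ∧ n + 2 ≤ 2 * m + 1 := by omega
      have hm4 : ((n : ℝ) + 2) / 4 ≤ (m : ℝ) := by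
        have : ((n : ℝ) + 2) ≤ 2 * (m : ℝ) + 1 := by exact_mod_cast hmb.2
        linarith [Nat.cast_nonneg (α := ℝ) n]
      have hcx : c (n + 2) ≤ c (2 * m) := hcle _ _ hmb.1
      have hbm : 0 < c (2 * m) := lt_of_lt_of_le hx hcx
      have h5 := hcl m hbm
      have h6 : (c (n + 2)) ^ (-ε) ≥ (c (2 * m)) ^ (-ε) :=
        rpow_le_rpow_of_nonpos hx hcx (by linarith)
      set y : ℝ := cst * ((n : ℝ) + 2) / 4 with hy
      have hypos : 0 < y := by positivity
      have hyc : y ≤ (c (n + 2)) ^ (-ε) := by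
        have : y ≤ cst * m := by
          rw [hy]
          rw [mul_div_assoc]
          exact mul_le_mul_of_nonneg_left hm4 hcstpos.le
        linarith
      have hce : (0:ℝ) < c (n + 2) ^ ε := rpow_pos_of_pos hx ε
      have h7 : c (n + 2) ^ ε ≤ y⁻¹ := by
        rw [← one_div, le_div_iff₀ hypos]
        have h8 := mul_le_mul_of_nonneg_left hyc hce.le
        rw [rpow_neg (hc0 _), mul_inv_cancel₀ hce.ne'] at h8
        exact h8
      have h9 : c (n + 2) ≤ (y⁻¹) ^ (ε⁻¹) := by
        have := rpow_le_rpow (rpow_nonneg (hc0 _) ε) h7 (by positivity : (0:ℝ) ≤ ε⁻¹)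
        rwa [rpow_rpow_inv (hc0 _) hε.ne'] at this
      have h10 : c (n + 2) ^ s ≤ ((y⁻¹) ^ (ε⁻¹)) ^ s :=
        rpow_le_rpow (hc0 _) h9 hs0.le
      have h11 : ((y⁻¹) ^ (ε⁻¹)) ^ s = (y⁻¹) ^ (ε⁻¹ * s) := by
        rw [← rpow_mul (by positivity : (0:ℝ) ≤ y⁻¹)]
      have h12 : (y⁻¹) ^ (ε⁻¹ * s)
          = (4 / cst) ^ (ε⁻¹ * s) * ((n : ℝ) + 2) ^ (-(ε⁻¹ * s)) := by
        have hy2 : y⁻¹ = (4 / cst) * ((n : ℝ) + 2)⁻¹ := by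
          rw [hy]; field_simp
        rw [hy2, mul_rpow (by positivity) (by positivity),
          inv_rpow (by positivity), ← rpow_neg (by positivity)]
      rw [h11, h12] at h10
      exact h10
  -- summability of the two comparison series
  have hsumh : Summable (fun n : ℕ => c (n + 1) ^ s) := by
    rw [← summable_nat_add_iff 1]
    apply Summable.of_nonneg_of_le (fun n => rpow_nonneg (hc0 _) _) (fun n => hdecs n)
    apply Summable.mul_left
    have hp : (1:ℝ) < ε⁻¹ * s := by
      rw [← div_eq_inv_mul] at *
      exact (one_lt_div hε).mpr hsε
    have base : Summable (fun n : ℕ => (n : ℝ) ^ (-(ε⁻¹ * s))) :=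
      Real.summable_nat_rpow.mpr (by linarith)
    have h2 := (_root_.summable_nat_add_iff 2).mpr base
    apply h2.congr
    intro n
    push_cast
    ring_nf
  have hsumg : Summable (fun n : ℕ => (c (n + 1) - c (n + 2)) * (c (n + 1)) ^ (-s)) :=
    summable_weighted hs0 hs1 c hc0 hcm
  -- comparison
  have hfun : (fun j : ℕ => (f ((j : ℝ) + 1) - f ((j : ℝ) + 2)) ^ ((1 : ℝ) / 2))
      = fun j : ℕ => (c (j + 1) - c (j + 2)) ^ ((1 : ℝ) / 2) := by
    funext j
    have e1 : ((j + 1 : ℕ) : ℝ) = (j : ℝ) + 1 := by push_cast; ring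
    have e2 : ((j + 2 : ℕ) : ℝ) = (j : ℝ) + 2 := by push_cast; ring
    rw [hcdef]
    simp only [e1, e2]
  rw [hfun]
  apply Summable.of_nonneg_of_le
    (fun j => rpow_nonneg (sub_nonneg.mpr (hcle (j + 1) (j + 2) (by omega))) _)
    (f := fun j : ℕ => ((c (j + 1) - c (j + 2)) * (c (j + 1)) ^ (-s) + c (j + 1) ^ s) / 2)
  · intro j
    rcases eq_or_lt_of_le (hc0 (j + 1)) with hx | hx
    · have hx2 : c (j + 2) = 0 :=
        le_antisymm (hx ▸ hcle (j + 1) (j + 2) (by omega)) (hc0 _)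
      rw [← hx, hx2, sub_zero, zero_rpow (by norm_num : (1:ℝ)/2 ≠ 0)]
      rw [zero_rpow hs0.ne']
      simp
    · have hxy : (c (j + 1) - c (j + 2)) * (c (j + 1)) ^ (-s) * (c (j + 1)) ^ s
          = c (j + 1) - c (j + 2) := by
        rw [mul_assoc, rpow_neg (hc0 _), inv_mul_cancel₀ (rpow_pos_of_pos hx s).ne', mul_one]
      have hd : 0 ≤ c (j + 1) - c (j + 2) :=
        sub_nonneg.mpr (hcle (j + 1) (j + 2) (by omega))
      have := sqrt_le_half_add (x := (c (j + 1) - c (j + 2)) * (c (j + 1)) ^ (-s))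
        (y := c (j + 1) ^ s)
        (mul_nonneg hd (rpow_nonneg (hc0 (j + 1)) (-s))) (rpow_nonneg (hc0 (j + 1)) s)
      rw [hxy] at this
      exact this
  · exact (hsumg.add hsumh).div_const 2
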